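/- arXiv:2011.08565 — 2 statements merged into one kernel-verified Lean document; each statement's English description precedes it below -/
import Mathlib

section
/- Suppose f_t' > 0 at the equilibrium incoming investments for all t, and each individual is strictly more related to herself than to any other (r_{i,i} > r_{i,t} for all t ≠ i). Then at any Nash equilibrium x*, every individual i attaining the highest marginal gain in personal fitness, i.e. i ∈ argmax_{u∈I} f_u'(y*_u), is selfish: x*_{i,t} = 0 for all t ≠ i. -/
/-- If marginal fitnesses are positive at equilibrium and each individual is
strictly more related to herself than to anyone else, then any individual with
the highest marginal gain in personal fitness is selfish at equilibrium. -/
theorem argmax_marginal_fitness_is_selfish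
    {I : Type*} [Fintype I] [Nonempty I]
    (f : I → ℝ → ℝ) (r : I → I → ℝ) (b : I → ℝ)
    (hb : ∀ s, 0 < b s)
    (hr : ∀ s t, 0 ≤ r s t ∧ r s t ≤ 1) (hrss : ∀ s, r s s = 1)
    (hdiff : ∀ t, Differentiable ℝ (f t))
    (hdiff2 : ∀ t, Differentiable ℝ (deriv (f t)))
    (hf'' : ∀ t y, deriv (deriv (f t)) y ≤ 0)
    (xstar : I → I → ℝ)
    (hpos : ∀ s t, 0 ≤ xstar s t)
    (hcomp : ∀ s t,
      (Finset.univ.sup' Finset.univ_nonempty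
          (fun u => r s u * deriv (f u) (∑ v, xstar v u))
        - r s t * deriv (f t) (∑ v, xstar v t)) * xstar s t = 0)
    (hbud : ∀ s, ∑ t, xstar s t = b s)
    (hf'pos : ∀ t, 0 < deriv (f t) (∑ v, xstar v t))
    (hself : ∀ i t, t ≠ i → r i t < r i i) :
    ∀ i, (∀ u, deriv (f u) (∑ v, xstar v u) ≤ deriv (f i) (∑ v, xstar v i)) →
      ∀ t, t ≠ i → xstar i t = 0 := by
  intro i hi t ht
  have key := hcomp i t
  have hsup : r i i * deriv (f i) (∑ v, xstar v i) ≤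
      Finset.univ.sup' Finset.univ_nonempty
        (fun u => r i u * deriv (f u) (∑ v, xstar v u)) := by
    exact Finset.le_sup' (fun u => r i u * deriv (f u) (∑ v, xstar v u))
      (Finset.mem_univ i)
  have hlt : r i t * deriv (f t) (∑ v, xstar v t) <
      r i i * deriv (f i) (∑ v, xstar v i) := by
    have h1 : r i t * deriv (f t) (∑ v, xstar v t) <
        1 * deriv (f t) (∑ v, xstar v t) := by
      apply mul_lt_mul_of_pos_right _ (hf'pos t)
      have := hself i t ht
      rwa [hrss i] at this
    rw [hrss i]
    calc r i t * deriv (f t) (∑ v, xstar v t)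
        < 1 * deriv (f t) (∑ v, xstar v t) := h1
      _ = deriv (f t) (∑ v, xstar v t) := one_mul _
      _ ≤ deriv (f i) (∑ v, xstar v i) := hi t
      _ = 1 * deriv (f i) (∑ v, xstar v i) := (one_mul _).symm
  have hgap : 0 < Finset.univ.sup' Finset.univ_nonempty
        (fun u => r i u * deriv (f u) (∑ v, xstar v u))
      - r i t * deriv (f t) (∑ v, xstar v t) := by linarith
  rcases mul_eq_zero.mp key with h | h
  · linarith
  · exact h
end

section
/- In a two-individual family I = {p, c} (parent and child) with symmetric relatedness r_{p,c} = r_{c,p} = r ∈ (0,1), and identical differentiable, strictly concave, strictly increasing fitness functions f_p = f_c = f, if at a Nash equilibrium the parent invests positively in the child (x*_{p,c} > 0) then f'(y*_c) ≥ f'(y*_p), i.e. y*_c ≤ y*_p; consequently the child, having f'(y*_c) ≥ f'(y*_p) and r_{c,c} = 1 > r, is selfish: x*_{c,p} = 0. -/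
/-- Parent-child family: if at equilibrium the parent invests positively in the
child, then the child's marginal fitness weakly exceeds the parent's, hence the
child's incoming investment is at most the parent's, and the child is selfish. -/
theorem parent_child_selfish_child
    {I : Type*} [Fintype I] [Nonempty I]
    (p c : I) (hpc : p ≠ c) (hall : ∀ i, i = p ∨ i = c)
    (f : ℝ → ℝ) (r : I → I → ℝ) (b : I → ℝ)
    (hb : ∀ s, 0 < b s)
    (r0 : ℝ) (hr0 : 0 < r0) (hr1 : r0 < 1)
    (hrpc : r p c = r0) (hrcp : r c p = r0) (hrself : ∀ i, r i i = 1)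
    (hdiff : Differentiable ℝ f)
    (hf'pos : ∀ y, 0 < deriv f y)
    (hf'anti : StrictAnti (deriv f))
    (xstar : I → I → ℝ)
    (hpos : ∀ s t, 0 ≤ xstar s t)
    (hcomp : ∀ s t,
      (Finset.univ.sup' Finset.univ_nonempty
          (fun u => r s u * deriv f (∑ v, xstar v u))
        - r s t * deriv f (∑ v, xstar v t)) * xstar s t = 0)
    (hbud : ∀ s, ∑ t, xstar s t = b s)
    (hinvest : 0 < xstar p c) :
    deriv f (∑ v, xstar v p) ≤ deriv f (∑ v, xstar v c) ∧
    ∑ v, xstar v c ≤ ∑ v, xstar v p ∧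
    xstar c p = 0 := by
  set yp := ∑ v, xstar v p with hyp
  set yc := ∑ v, xstar v c with hyc
  -- From complementary slackness for (p,c) with positive investment:
  have hzero : Finset.univ.sup' Finset.univ_nonempty
      (fun u => r p u * deriv f (∑ v, xstar v u)) = r p c * deriv f yc := by
    have h := hcomp p c
    rcases mul_eq_zero.mp h with h' | h'
    · linarith [h']
    · exact absurd h' (ne_of_gt hinvest)
  -- sup bound: term at p
  have hle : r p p * deriv f yp ≤ r p c * deriv f yc := by
    rw [← hzero]
    exact Finset.le_sup' (fun u => r p u * deriv f (∑ v, xstar v u)) (Finset.mem_univ p)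
  rw [hrself p, hrpc, one_mul] at hle
  have h1 : deriv f yp ≤ deriv f yc := by
    nlinarith [hf'pos yc]
  have h2 : yc ≤ yp := by
    by_contra h
    push_neg at h
    exact absurd h1 (not_le.mpr (hf'anti h))
  refine ⟨h1, h2, ?_⟩
  -- child selfish: factor in hcomp c p is positive
  have hsup : r c c * deriv f yc ≤ Finset.univ.sup' Finset.univ_nonempty
      (fun u => r c u * deriv f (∑ v, xstar v u)) :=
    Finset.le_sup' (fun u => r c u * deriv f (∑ v, xstar v u)) (Finset.mem_univ c)
  rw [hrself c, one_mul] at hsup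
  have hfac : 0 < Finset.univ.sup' Finset.univ_nonempty
      (fun u => r c u * deriv f (∑ v, xstar v u)) - r c p * deriv f yp := by
    rw [hrcp]
    nlinarith [hf'pos yp]
  have h := hcomp c p
  rcases mul_eq_zero.mp h with h' | h'
  · exact absurd h' (ne_of_gt hfac)
  · exact h'
end
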